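/- arXiv:1908.09477 — 4 statements merged into one kernel-verified Lean document; each statement's English description precedes it below -/
import Mathlib

section
/- If every path through the matrix of a propositional formula F in disjunctive normal form (a set of clauses, where a path picks one literal from each clause) contains a complementary pair of literals {L, ¬L}, then F is valid (a tautology). -/
/-- A literal is an atom with a polarity. -/
def evalLit {α : Type} (v : α → Bool) (L : α × Bool) : Prop := v L.1 = L.2

/-- A set of literals contains a complementary pair `{L, ¬L}`. -/
def hasConnection {α : Type} (p : List (α × Bool)) : Prop :=
  ∃ a : α, (a, true) ∈ p ∧ (a, false) ∈ p

/-- `p` is a path through matrix `M`: it picks one literal from each clause. -/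
def IsPath {α : Type} (M : List (List (α × Bool))) (p : List (α × Bool)) : Prop :=
  List.Forall₂ (fun L C => L ∈ C) p M

/-- The DNF matrix `M` is valid: under every valuation, some clause is wholly true. -/
def MatrixValid {α : Type} (M : List (List (α × Bool))) : Prop :=
  ∀ v : α → Bool, ∃ C ∈ M, ∀ L ∈ C, evalLit v L

theorem paths_closed_imp_valid {α : Type} (M : List (List (α × Bool)))
    (h : ∀ p, IsPath M p → hasConnection p) : MatrixValid M := by
  intro v
  by_contra hc
  push_neg at hc
  -- each clause has a literal false under v
  have hx : ∀ C ∈ M, ∃ L ∈ C, v L.1 ≠ L.2 := by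
    intro C hC
    obtain ⟨L, hL, hLv⟩ := hc C hC
    exact ⟨L, hL, hLv⟩
  -- build a path of false literals
  have key : ∀ (N : List (List (α × Bool))), (∀ C ∈ N, ∃ L ∈ C, v L.1 ≠ L.2) →
      ∃ p, IsPath N p ∧ ∀ L ∈ p, v L.1 ≠ L.2 := by
    intro N
    induction N with
    | nil => exact fun _ => ⟨[], List.Forall₂.nil, by simp⟩
    | cons C N ih =>
      intro hN
      obtain ⟨L, hL, hLv⟩ := hN C (by simp)
      obtain ⟨p, hp, hpv⟩ := ih (fun C' hC' => hN C' (by simp [hC']))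
      refine ⟨L :: p, List.Forall₂.cons hL hp, ?_⟩
      intro L' hL'
      rcases List.mem_cons.mp hL' with rfl | hL'
      · exact hLv
      · exact hpv L' hL'
  obtain ⟨p, hp, hpv⟩ := key M hx
  obtain ⟨a, h1, h2⟩ := h p hp
  have := hpv _ h1
  have := hpv _ h2
  simp_all
end

section
/- Conversely, if a DNF matrix is valid (its disjunction of clause-conjunctions is a tautology), then every path through the matrix contains a complementary pair of literals. -/
lemma path_meets {α : Type} {M : List (List (α × Bool))} {p : List (α × Bool)}
    (hp : IsPath M p) : ∀ C ∈ M, ∃ L ∈ p, L ∈ C := by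
  induction hp with
  | nil => intro C hC; simp at hC
  | cons h _ ih =>
    intro C hC
    rcases List.mem_cons.mp hC with rfl | hC
    · exact ⟨_, List.mem_cons_self, h⟩
    · obtain ⟨L, hL, hLC⟩ := ih C hC
      exact ⟨L, List.mem_cons_of_mem _ hL, hLC⟩

theorem valid_imp_paths_closed {α : Type} (M : List (List (α × Bool)))
    (h : MatrixValid M) : ∀ p, IsPath M p → hasConnection p := by
  intro p hp
  by_contra hc
  classical
  set v : α → Bool := fun a => if (a, false) ∈ p then true else false with hv
  obtain ⟨C, hC, hall⟩ := h v
  obtain ⟨L, hLp, hLC⟩ := path_meets hp C hC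
  have hev := hall L hLC
  obtain ⟨a, b⟩ := L
  cases b with
  | true =>
    have hnf : (a, false) ∉ p := fun hf => hc ⟨a, hLp, hf⟩
    simp [evalLit, hv, hnf] at hev
  | false =>
    simp [evalLit, hv, hLp] at hev
end

section
/- The quantified sequent rule (l∃) is sound: let X, Y be sets of concepts, X' = {a | ∀r.a ∈ X} and Y' = {a | ∃r.a ∈ Y}. If the sequent X', b ⊢ Y' is valid, then the sequent X, ∃r.b ⊢ Y restricted to its quantified members — i.e., {∀r.a : a ∈ X'}, ∃r.b ⊢ {∃r.a : a ∈ Y'} — is valid. -/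
inductive ALCConcept (α ρ : Type) : Type
  | atom : α → ALCConcept α ρ
  | neg : ALCConcept α ρ → ALCConcept α ρ
  | conj : ALCConcept α ρ → ALCConcept α ρ → ALCConcept α ρ
  | disj : ALCConcept α ρ → ALCConcept α ρ → ALCConcept α ρ
  | all : ρ → ALCConcept α ρ → ALCConcept α ρ
  | ex : ρ → ALCConcept α ρ → ALCConcept α ρ

structure ALCInterp (α ρ : Type) where
  dom : Type
  atomI : α → Set dom
  roleI : ρ → Set (dom × dom)

variable {α ρ : Type}

def ALCInterp.interp (I : ALCInterp α ρ) : ALCConcept α ρ → Set I.dom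
  | .atom a => I.atomI a
  | .neg C => (I.interp C)ᶜ
  | .conj C D => I.interp C ∩ I.interp D
  | .disj C D => I.interp C ∪ I.interp D
  | .all r C => {x | ∀ y, (x, y) ∈ I.roleI r → y ∈ I.interp C}
  | .ex r C => {x | ∃ y, (x, y) ∈ I.roleI r ∧ y ∈ I.interp C}

/-- A sequent `X ⊢ Y` is valid iff in every interpretation, every domain element
belonging to all concepts of `X` belongs to some concept of `Y`. -/
def SeqValid (X Y : Set (ALCConcept α ρ)) : Prop :=
  ∀ I : ALCInterp α ρ, ∀ x : I.dom,
    (∀ C ∈ X, x ∈ I.interp C) → ∃ C ∈ Y, x ∈ I.interp C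

theorem l_exists_sound {α ρ : Type} (X' Y' : Set (ALCConcept α ρ)) (r : ρ) (b : ALCConcept α ρ)
    (h : SeqValid (insert b X') Y') :
    SeqValid (insert (ALCConcept.ex r b) ((ALCConcept.all r) '' X')) ((ALCConcept.ex r) '' Y') := by
  intro I x hx
  obtain ⟨y, hxy, hyb⟩ := hx _ (Set.mem_insert _ _)
  obtain ⟨C, hCY, hyC⟩ := h I y (by
    rintro C (rfl | hC)
    · exact hyb
    · exact hx _ (Set.mem_insert_of_mem _ ⟨C, hC, rfl⟩) y hxy)
  exact ⟨.ex r C, ⟨C, hCY, rfl⟩, y, hxy, hyC⟩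
end

section
/- The quantified sequent rule (r∀) is sound: if X' ⊢ b, Y' is valid, where X' = {a | ∀r.a ∈ X} and Y' = {a | ∃r.a ∈ Y}, then the sequent {∀r.a : a ∈ X'} ⊢ ∀r.b, {∃r.a : a ∈ Y'} is valid. -/
variable {α ρ : Type}

theorem r_forall_sound {α ρ : Type} (X' Y' : Set (ALCConcept α ρ)) (r : ρ) (b : ALCConcept α ρ)
    (h : SeqValid X' (insert b Y')) :
    SeqValid ((ALCConcept.all r) '' X') (insert (ALCConcept.all r b) ((ALCConcept.ex r) '' Y')) := by
  intro I x hx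
  by_cases hb : ∀ y, (x, y) ∈ I.roleI r → y ∈ I.interp b
  · exact ⟨_, Set.mem_insert _ _, hb⟩
  · push_neg at hb
    obtain ⟨y, hxy, hyb⟩ := hb
    have hy : ∀ C ∈ X', y ∈ I.interp C := by
      intro C hC
      have := hx _ ⟨C, hC, rfl⟩
      exact this y hxy
    obtain ⟨C, hC, hyC⟩ := h I y hy
    rcases hC with rfl | hC
    · exact absurd hyC hyb
    · exact ⟨ALCConcept.ex r C, Set.mem_insert_of_mem _ ⟨C, hC, rfl⟩, ⟨y, hxy, hyC⟩⟩
end
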